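/- Let f : ℝ^d → ℝ be continuous and bounded below with exp(-f/δ) ∈ L¹, and suppose the soft Moreau envelope f^{λ,δ} is convex. Then f^{λ,δ} is (1/λ)-smooth (its gradient is (1/λ)-Lipschitz), and the ZOPPA iteration x^{k+1} = x^k - λ∇f^{λ,δ}(x^k) satisfies, for every k ≥ 1, f^{λ,δ}(x^k) - min f^{λ,δ} ≤ dist(x^0, X⋆)²/(2λk), where X⋆ = argmin f^{λ,δ} (assumed nonempty). -/

import Mathlib

set_option maxHeartbeats 1000000

open MeasureTheory Real Set
open scoped RealInnerProductSpace ENNReal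

section Aux
variable {E : Type*} [NormedAddCommGroup E] [InnerProductSpace ℝ E] [CompleteSpace E]

/-- Gradient inequality for convex differentiable functions. -/
lemma zoppa_grad_ineq {h : E → ℝ} {g : E → E} (hc : ConvexOn ℝ Set.univ h)
    (hd : ∀ z, HasGradientAt h (g z) z) (x y : E) :
    h x + ⟪g x, y - x⟫ ≤ h y := by
  have hline : ∀ t : ℝ, HasDerivAt (fun t : ℝ => t • (y - x) + x) (y - x) t := fun t => by
    simpa using ((hasDerivAt_id t).smul_const (y - x)).add_const x
  have hφc : ConvexOn ℝ Set.univ (fun t : ℝ => h (t • (y - x) + x)) := by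
    have h2 := hc.comp_affineMap (AffineMap.lineMap x y)
    simp only [Set.preimage_univ] at h2
    have hfe : (fun t : ℝ => h (t • (y - x) + x)) = h ∘ AffineMap.lineMap x y := by
      funext t; simp [AffineMap.lineMap_apply]
    rw [hfe]; exact h2
  have hφd : HasDerivAt (fun t : ℝ => h (t • (y - x) + x)) ⟪g x, y - x⟫ 0 := by
    have h1 := ((hd ((0:ℝ) • (y - x) + x)).hasFDerivAt).comp_hasDerivAt 0 (hline 0)
    simpa [InnerProductSpace.toDual_apply_apply, Function.comp_def] using h1
  have hs := hφc.le_slope_of_hasDerivAt (Set.mem_univ (0:ℝ)) (Set.mem_univ 1) one_pos hφd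
  rw [slope_def_field] at hs
  simp at hs
  linarith

lemma zoppa_hasGradientAt_G {F : E → ℝ} {lam : ℝ}
    (hFd : ∀ z, DifferentiableAt ℝ F z) (z : E) :
    HasGradientAt (fun w => 1/(2*lam) * ‖w‖^2 - F w) ((1/lam) • z - gradient F z) z := by
  have hq := ((hasFDerivAt_id z).norm_sq).const_mul (1/(2*lam))
  simp only [id_eq] at hq
  have hFz := ((hFd z).hasGradientAt).hasFDerivAt
  have hsub := hq.sub hFz
  have heq : ((1/(2*lam)) • (2 • ((innerSL ℝ z).comp (ContinuousLinearMap.id ℝ E))) -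
      InnerProductSpace.toDual ℝ E (gradient F z)) =
      InnerProductSpace.toDual ℝ E ((1/lam) • z - gradient F z) := by
    ext w
    simp [InnerProductSpace.toDual_apply_apply, inner_sub_left, real_inner_smul_left, two_smul]
    ring
  rw [heq] at hsub
  have hsg := hsub.hasGradientAt
  simp only [LinearIsometryEquiv.symm_apply_apply] at hsg
  exact hsg

lemma zoppa_descent {F : E → ℝ} {lam : ℝ} (hlam : 0 < lam)
    (hFd : ∀ z, DifferentiableAt ℝ F z)
    (hG : ConvexOn ℝ Set.univ (fun z => 1/(2*lam) * ‖z‖^2 - F z)) (x y : E) :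
    F y ≤ F x + ⟪gradient F x, y - x⟫ + 1/(2*lam) * ‖y - x‖^2 := by
  have h1 := zoppa_grad_ineq hG (fun z => zoppa_hasGradientAt_G hFd z) x y
  rw [inner_sub_left, real_inner_smul_left] at h1
  have hexp : ‖y‖^2 = ‖x‖^2 + 2*⟪x, y - x⟫ + ‖y - x‖^2 := by
    have h2 : y = x + (y - x) := by abel
    calc ‖y‖^2 = ‖x + (y - x)‖^2 := by rw [← h2]
    _ = ‖x‖^2 + 2*⟪x, y-x⟫ + ‖y-x‖^2 := by rw [@norm_add_sq_real]
  have hl : (1/lam : ℝ) = 2 * (1/(2*lam)) := by field_simp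
  rw [hl] at h1
  have hexp2 : 1/(2*lam) * ‖y‖^2
      = 1/(2*lam)*‖x‖^2 + 2*(1/(2*lam))*⟪x, y-x⟫ + 1/(2*lam)*‖y-x‖^2 := by
    rw [hexp]; ring
  linarith [h1, hexp2]

lemma zoppa_half {F : E → ℝ} {lam : ℝ} (hlam : 0 < lam)
    (hlow : ∀ x y : E, F x + ⟪gradient F x, y - x⟫ ≤ F y)
    (hdesc : ∀ x y : E, F y ≤ F x + ⟪gradient F x, y - x⟫ + 1/(2*lam) * ‖y - x‖^2)
    (x y : E) :
    lam/2 * ‖gradient F y - gradient F x‖^2 ≤ F y - F x - ⟪gradient F x, y - x⟫ := by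
  set v := gradient F y - gradient F x with hv
  set z := y - lam • v with hz
  have h1 := hdesc y z
  have h2 := hlow x z
  have h3 : z - y = -(lam • v) := by rw [hz]; abel
  have h4 : z - x = (y - x) - lam • v := by rw [hz]; abel
  rw [h3, inner_neg_right, real_inner_smul_right] at h1
  rw [h4, inner_sub_right, real_inner_smul_right] at h2
  have h5 : ⟪gradient F y, v⟫ - ⟪gradient F x, v⟫ = ‖v‖^2 := by
    rw [← inner_sub_left, ← hv, real_inner_self_eq_norm_sq]
  have h5' : lam * ⟪gradient F y, v⟫ - lam * ⟪gradient F x, v⟫ = lam * ‖v‖^2 := by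
    linear_combination lam * h5
  have h6 : ‖-(lam • v)‖^2 = lam^2 * ‖v‖^2 := by
    rw [norm_neg, norm_smul]
    simp [abs_of_pos hlam]
    ring
  rw [h6] at h1
  have hh : 1/(2*lam) * (lam^2*‖v‖^2) = lam/2 * ‖v‖^2 := by field_simp
  nlinarith [h1, h2, h5', hh]

lemma zoppa_lip {F : E → ℝ} {lam : ℝ} (hlam : 0 < lam)
    (hlow : ∀ x y : E, F x + ⟪gradient F x, y - x⟫ ≤ F y)
    (hdesc : ∀ x y : E, F y ≤ F x + ⟪gradient F x, y - x⟫ + 1/(2*lam) * ‖y - x‖^2)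
    (x y : E) :
    lam * ‖gradient F y - gradient F x‖ ≤ ‖y - x‖ := by
  have h1 := zoppa_half hlam hlow hdesc x y
  have h2 := zoppa_half hlam hlow hdesc y x
  rw [norm_sub_rev] at h2
  have h3 : ⟪gradient F x, y - x⟫ + ⟪gradient F y, x - y⟫
      = -⟪gradient F y - gradient F x, y - x⟫ := by
    rw [inner_sub_left, show (x - y) = -(y-x) by abel, inner_neg_right]; ring
  have hcs := real_inner_le_norm (gradient F y - gradient F x) (y - x)
  have hkey : lam * ‖gradient F y - gradient F x‖^2
      ≤ ‖gradient F y - gradient F x‖ * ‖y - x‖ := by nlinarith [h1, h2, h3, hcs]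
  rcases eq_or_lt_of_le (norm_nonneg (gradient F y - gradient F x)) with hv | hv
  · rw [← hv]; simp
  · have := mul_le_mul_of_nonneg_left hkey (le_of_lt hv)
    nlinarith [hv]

end Aux

lemma zoppa_gauss_bound {K t : ℝ} (hK : 0 < K) (ht : 0 ≤ t) :
    2*K*t*Real.exp (-(K*t^2)) ≤ Real.sqrt K := by
  have hs : 0 < Real.sqrt K := Real.sqrt_pos.2 hK
  have hKs : Real.sqrt K ^ 2 = K := Real.sq_sqrt hK.le
  have h1 : 2*K*t ≤ Real.sqrt K * (1 + K*t^2) := by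
    nlinarith [mul_nonneg hs.le (sq_nonneg (Real.sqrt K * t - 1))]
  have h2 : (1:ℝ) + K*t^2 ≤ Real.exp (K*t^2) := by linarith [Real.add_one_le_exp (K*t^2)]
  have h3 := h1.trans (mul_le_mul_of_nonneg_left h2 hs.le)
  have h4 := mul_le_mul_of_nonneg_right h3 (Real.exp_pos (-(K*t^2))).le
  calc 2*K*t*Real.exp (-(K*t^2)) ≤ Real.sqrt K * Real.exp (K*t^2) * Real.exp (-(K*t^2)) := h4
  _ = Real.sqrt K := by rw [mul_assoc, ← Real.exp_add]; simp

section Envelope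

variable {d : ℕ} (f : EuclideanSpace ℝ (Fin d) → ℝ) (δ lam : ℝ)

/-- The (unnormalized) soft Moreau envelope integral. -/
noncomputable def zoppaU (x : EuclideanSpace ℝ (Fin d)) : ℝ :=
  ∫ y, Real.exp (-(f y + ‖x - y‖ ^ 2 / (2 * lam)) / δ)

variable {f} {δ} {lam}

lemma zoppa_integrand_eq (hδ : 0 < δ) (hlam : 0 < lam) (x y : EuclideanSpace ℝ (Fin d)) :
    Real.exp (-(f y + ‖x - y‖ ^ 2 / (2 * lam)) / δ)
      = Real.exp (-f y / δ) * Real.exp (-((1/(2*lam*δ)) * ‖x - y‖^2)) := by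
  rw [← Real.exp_add]; congr 1; field_simp; ring

lemma zoppa_integrand_cont (hf : Continuous f) (x : EuclideanSpace ℝ (Fin d)) :
    Continuous (fun y : EuclideanSpace ℝ (Fin d) =>
      Real.exp (-(f y + ‖x - y‖ ^ 2 / (2 * lam)) / δ)) := by
  apply Real.continuous_exp.comp
  apply Continuous.div_const
  apply Continuous.neg
  exact hf.add (((continuous_const.sub continuous_id).norm.pow 2).div_const _)

lemma zoppa_integrand_integrable (hf : Continuous f)
    (hint : Integrable (fun y : EuclideanSpace ℝ (Fin d) => Real.exp (-f y / δ)))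
    (hδ : 0 < δ) (hlam : 0 < lam) (x : EuclideanSpace ℝ (Fin d)) :
    Integrable (fun y : EuclideanSpace ℝ (Fin d) =>
      Real.exp (-(f y + ‖x - y‖ ^ 2 / (2 * lam)) / δ)) := by
  refine hint.mono ((zoppa_integrand_cont hf x).aestronglyMeasurable) (ae_of_all _ fun y => ?_)
  rw [Real.norm_eq_abs, Real.norm_eq_abs, abs_of_pos (Real.exp_pos _),
    abs_of_pos (Real.exp_pos _), zoppa_integrand_eq hδ hlam]
  have h1 : Real.exp (-((1/(2*lam*δ)) * ‖x - y‖^2)) ≤ 1 := by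
    rw [Real.exp_le_one_iff]
    have : 0 ≤ (1/(2*lam*δ)) * ‖x - y‖^2 := by positivity
    linarith
  calc Real.exp (-f y / δ) * Real.exp (-((1/(2*lam*δ)) * ‖x - y‖^2))
      ≤ Real.exp (-f y / δ) * 1 := by
        exact mul_le_mul_of_nonneg_left h1 (Real.exp_pos _).le
  _ = Real.exp (-f y / δ) := by ring

lemma zoppaU_pos (hf : Continuous f)
    (hint : Integrable (fun y : EuclideanSpace ℝ (Fin d) => Real.exp (-f y / δ)))
    (hδ : 0 < δ) (hlam : 0 < lam) (x : EuclideanSpace ℝ (Fin d)) :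
    0 < zoppaU f δ lam x := by
  rw [zoppaU, integral_pos_iff_support_of_nonneg (fun y => (Real.exp_pos _).le)
    (zoppa_integrand_integrable hf hint hδ hlam x)]
  have hsupp : Function.support (fun y : EuclideanSpace ℝ (Fin d) =>
      Real.exp (-(f y + ‖x - y‖ ^ 2 / (2 * lam)) / δ)) = Set.univ :=
    Set.eq_univ_of_forall fun y => (Real.exp_pos _).ne'
  rw [hsupp]
  exact isOpen_univ.measure_pos volume ⟨0, trivial⟩

lemma zoppaU_differentiable (hf : Continuous f)
    (hint : Integrable (fun y : EuclideanSpace ℝ (Fin d) => Real.exp (-f y / δ)))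
    (hδ : 0 < δ) (hlam : 0 < lam) (x₀ : EuclideanSpace ℝ (Fin d)) :
    DifferentiableAt ℝ (zoppaU f δ lam) x₀ := by
  set K : ℝ := 1/(2*lam*δ) with hK_def
  have hK : 0 < K := by rw [hK_def]; positivity
  set Φ' : EuclideanSpace ℝ (Fin d) → EuclideanSpace ℝ (Fin d) →
      (EuclideanSpace ℝ (Fin d) →L[ℝ] ℝ) :=
    fun x y => (Real.exp (-(f y + ‖x - y‖ ^ 2 / (2 * lam)) / δ) *
      (-(2*K))) • (innerSL ℝ (x - y)) with hΦ'_def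
  have hderiv : ∀ (y x : EuclideanSpace ℝ (Fin d)),
      HasFDerivAt (fun x => Real.exp (-(f y + ‖x - y‖ ^ 2 / (2 * lam)) / δ)) (Φ' x y) x := by
    intro y x
    have h0 : HasFDerivAt (fun x : EuclideanSpace ℝ (Fin d) => ‖x - y‖^2)
        (2 • ((innerSL ℝ (x - y)).comp (ContinuousLinearMap.id ℝ _))) x := by
      simpa using ((hasFDerivAt_id x).sub_const y).norm_sq
    have h1 : HasFDerivAt (fun x : EuclideanSpace ℝ (Fin d) =>
        -(f y + ‖x - y‖^2/(2*lam))/δ)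
        ((-K) • (2 • ((innerSL ℝ (x - y)).comp (ContinuousLinearMap.id ℝ _)))) x := by
      have heq : (fun x : EuclideanSpace ℝ (Fin d) => -(f y + ‖x - y‖^2/(2*lam))/δ)
          = fun x : EuclideanSpace ℝ (Fin d) => (-K) * ‖x - y‖^2 + (-(f y)/δ) := by
        funext x; rw [hK_def]; field_simp; ring
      rw [heq]
      exact (h0.const_mul (-K)).add_const _
    have h2 := h1.exp
    refine h2.congr_fderiv ?_
    simp only [hΦ'_def]
    ext w
    simp [two_smul]
    ring
  have hbound : ∀ (y x : EuclideanSpace ℝ (Fin d)),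
      ‖Φ' x y‖ ≤ Real.sqrt K * Real.exp (-f y / δ) := by
    intro y x
    simp only [hΦ'_def]
    refine ContinuousLinearMap.opNorm_le_bound _ (by positivity) fun w => ?_
    simp only [ContinuousLinearMap.smul_apply, innerSL_apply_apply, smul_eq_mul, Real.norm_eq_abs]
    have habs : |(Real.exp (-(f y + ‖x - y‖ ^ 2 / (2 * lam)) / δ) * -(2*K)) * ⟪x - y, w⟫|
        = Real.exp (-(f y + ‖x - y‖ ^ 2 / (2 * lam)) / δ) * (2*K) * |⟪x - y, w⟫| := by
      rw [abs_mul, abs_mul, abs_of_pos (Real.exp_pos _), abs_neg,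
        abs_of_pos (by positivity : (0:ℝ) < 2*K)]
    rw [habs, zoppa_integrand_eq hδ hlam, ← hK_def]
    have hg := zoppa_gauss_bound hK (norm_nonneg (x - y))
    have hCS : |⟪x - y, w⟫| ≤ ‖x - y‖ * ‖w‖ := abs_real_inner_le_norm _ _
    have h5 : (0:ℝ) ≤ Real.exp (-f y/δ) * Real.exp (-(K*‖x - y‖^2)) * (2*K) := by positivity
    calc Real.exp (-f y/δ) * Real.exp (-(K*‖x - y‖^2)) * (2*K) * |⟪x - y, w⟫|
        ≤ Real.exp (-f y/δ) * Real.exp (-(K*‖x - y‖^2)) * (2*K) * (‖x - y‖ * ‖w‖) :=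
          mul_le_mul_of_nonneg_left hCS h5
    _ = (Real.exp (-f y/δ) * (2*K*‖x - y‖*Real.exp (-(K*‖x - y‖^2)))) * ‖w‖ := by ring
    _ ≤ (Real.exp (-f y/δ) * Real.sqrt K) * ‖w‖ :=
          mul_le_mul_of_nonneg_right
            (mul_le_mul_of_nonneg_left hg (Real.exp_pos _).le) (norm_nonneg w)
    _ = Real.sqrt K * Real.exp (-f y/δ) * ‖w‖ := by ring
  have hΦ'cont : Continuous (fun y => Φ' x₀ y) := by
    simp only [hΦ'_def]
    apply Continuous.fun_smul
    · exact (zoppa_integrand_cont hf x₀).mul continuous_const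
    · exact (ContinuousLinearMap.continuous _).comp (continuous_const.sub continuous_id)
  have hmain := hasFDerivAt_integral_of_dominated_of_fderiv_le (𝕜 := ℝ)
    (F := fun x y => Real.exp (-(f y + ‖x - y‖ ^ 2 / (2 * lam)) / δ)) (F' := Φ')
    (bound := fun y => Real.sqrt K * Real.exp (-f y / δ)) (x₀ := x₀) Filter.univ_mem
    (Filter.Eventually.of_forall fun x => (zoppa_integrand_cont hf x).aestronglyMeasurable)
    (zoppa_integrand_integrable hf hint hδ hlam x₀)
    hΦ'cont.aestronglyMeasurable
    (ae_of_all _ fun y x _ => hbound y x)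
    (hint.const_mul _)
    (ae_of_all _ fun y x _ => hderiv y x)
  exact hmain.differentiableAt

lemma zoppaU_logconv (hf : Continuous f)
    (hint : Integrable (fun y : EuclideanSpace ℝ (Fin d) => Real.exp (-f y / δ)))
    (hδ : 0 < δ) (hlam : 0 < lam) :
    ConvexOn ℝ Set.univ
      (fun z => 1/(2*lam) * ‖z‖^2 + δ * Real.log (zoppaU f δ lam z)) := by
  set K : ℝ := 1/(2*lam*δ) with hK_def
  have hK : 0 < K := by rw [hK_def]; positivity
  set A : EuclideanSpace ℝ (Fin d) → EuclideanSpace ℝ (Fin d) → ℝ :=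
    fun x y => Real.exp (-f y/δ - K*‖y‖^2 + 2*K*⟪x, y⟫) with hA_def
  have hAΦ : ∀ x y, A x y
      = Real.exp (K*‖x‖^2) * Real.exp (-(f y + ‖x - y‖ ^ 2 / (2 * lam)) / δ) := by
    intro x y
    simp only [hA_def]
    rw [← Real.exp_add]
    congr 1
    rw [norm_sub_sq_real, hK_def]
    field_simp
    ring
  have hAint : ∀ x, Integrable (A x) := by
    intro x
    have h1 : A x = fun y => Real.exp (K*‖x‖^2) *
        Real.exp (-(f y + ‖x - y‖ ^ 2 / (2 * lam)) / δ) := funext (hAΦ x)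
    rw [h1]
    exact (zoppa_integrand_integrable hf hint hδ hlam x).const_mul _
  have hAcont : ∀ x, Continuous (A x) := by
    intro x
    simp only [hA_def]
    apply Real.continuous_exp.comp
    apply Continuous.add
    · exact ((hf.neg.div_const δ).sub (continuous_const.mul (continuous_norm.pow 2)))
    · exact continuous_const.mul (Continuous.inner continuous_const continuous_id)
  have hvU : ∀ x, ∫ y, A x y = Real.exp (K*‖x‖^2) * zoppaU f δ lam x := by
    intro x
    rw [zoppaU, ← integral_const_mul]
    exact integral_congr_ae (ae_of_all _ fun y => hAΦ x y)
  have hApos : ∀ x, 0 < ∫ y, A x y := by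
    intro x
    rw [hvU x]
    exact mul_pos (Real.exp_pos _) (zoppaU_pos hf hint hδ hlam x)
  -- Memℒp for Hölder
  have hmem : ∀ (r : EuclideanSpace ℝ (Fin d)) (s' : ℝ), 0 < s' →
      MemLp (fun y => A r y ^ s') (ENNReal.ofReal (1/s')) volume := by
    intro r s' hs'
    have h0 : ENNReal.ofReal s' ≠ 0 := by
      simp [ENNReal.ofReal_eq_zero, not_le, hs']
    have h1 : ENNReal.ofReal s' ≠ ⊤ := ENNReal.ofReal_ne_top
    have h2 := (memLp_norm_rpow_iff (q := ENNReal.ofReal s') (p := 1)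
      ((hAcont r).aestronglyMeasurable) h0 h1).mpr ((memLp_one_iff_integrable).mpr (hAint r))
    rw [ENNReal.toReal_ofReal hs'.le] at h2
    have h3 : (1 : ℝ≥0∞) / ENNReal.ofReal s' = ENNReal.ofReal (1/s') := by
      rw [ENNReal.ofReal_div_of_pos hs', ENNReal.ofReal_one]
    rw [h3] at h2
    have h4 : (fun y => ‖A r y‖ ^ s') = fun y => A r y ^ s' := by
      funext y
      rw [Real.norm_eq_abs, abs_of_pos (Real.exp_pos _)]
    rwa [h4] at h2
  -- Hölder
  have hkey : ∀ (p q : EuclideanSpace ℝ (Fin d)) (s t : ℝ), 0 < s → 0 < t → s + t = 1 →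
      (∫ y, A (s•p + t•q) y) ≤ (∫ y, A p y)^s * (∫ y, A q y)^t := by
    intro p q s t hs ht hst
    have hconj : Real.HolderConjugate (1/s) (1/t) := Real.holderConjugate_one_div hs ht hst
    have hexp_eq : ∀ y, A (s•p + t•q) y = (A p y)^s * (A q y)^t := by
      intro y
      simp only [hA_def]
      rw [← Real.exp_mul, ← Real.exp_mul, ← Real.exp_add]
      congr 1
      rw [inner_add_left, real_inner_smul_left, real_inner_smul_left]
      linear_combination (f y/δ + K*‖y‖^2) * hst
    have hH := MeasureTheory.integral_mul_le_Lp_mul_Lq_of_nonneg hconj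
      (ae_of_all _ fun y => Real.rpow_nonneg (Real.exp_pos _).le s)
      (ae_of_all _ fun y => Real.rpow_nonneg (Real.exp_pos _).le t)
      (hmem p s hs) (hmem q t ht)
    have e1 : ∀ y, (A p y ^ s) ^ (1/s : ℝ) = A p y := by
      intro y
      rw [← Real.rpow_mul (Real.exp_pos _).le, one_div s, mul_inv_cancel₀ hs.ne', Real.rpow_one]
    have e2 : ∀ y, (A q y ^ t) ^ (1/t : ℝ) = A q y := by
      intro y
      rw [← Real.rpow_mul (Real.exp_pos _).le, one_div t, mul_inv_cancel₀ ht.ne', Real.rpow_one]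
    simp only [hA_def] at e1 e2
    simp only [e1, e2, one_div_one_div] at hH
    calc (∫ y, A (s•p + t•q) y) = ∫ y, (A p y)^s * (A q y)^t :=
          integral_congr_ae (ae_of_all _ fun y => hexp_eq y)
    _ ≤ (∫ y, A p y)^s * (∫ y, A q y)^t := hH
  -- the function equals δ * log of the MGF-type integral
  have hg : ∀ z, 1/(2*lam)*‖z‖^2 + δ * Real.log (zoppaU f δ lam z)
      = δ * Real.log (∫ y, A z y) := by
    intro z
    rw [hvU z, Real.log_mul (Real.exp_ne_zero _) (zoppaU_pos hf hint hδ hlam z).ne',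
      Real.log_exp, hK_def]
    field_simp
  refine ⟨convex_univ, ?_⟩
  intro p _ q _ s t hs ht hst
  simp only [smul_eq_mul]
  rcases eq_or_lt_of_le hs with hs0 | hs0
  · have ht1 : t = 1 := by linarith
    rw [← hs0, ht1]
    simp
  rcases eq_or_lt_of_le ht with ht0 | ht0
  · have hs1 : s = 1 := by linarith
    rw [← ht0, hs1]
    simp
  rw [hg, hg, hg]
  have h1 := hkey p q s t hs0 ht0 hst
  have h2 : Real.log (∫ y, A (s•p + t•q) y)
      ≤ s * Real.log (∫ y, A p y) + t * Real.log (∫ y, A q y) := by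
    calc Real.log (∫ y, A (s•p + t•q) y) ≤ Real.log ((∫ y, A p y)^s * (∫ y, A q y)^t) :=
          Real.log_le_log (hApos _) h1
    _ = s * Real.log (∫ y, A p y) + t * Real.log (∫ y, A q y) := by
        rw [Real.log_mul (Real.rpow_pos_of_pos (hApos p) s).ne'
          (Real.rpow_pos_of_pos (hApos q) t).ne',
          Real.log_rpow (hApos p), Real.log_rpow (hApos q)]
  have h3 := mul_le_mul_of_nonneg_left h2 hδ.le
  linarith

end Envelope


open MeasureTheory Real

/-- If the soft Moreau envelope `F = f^{λ,δ}` is convex, then it is `(1/λ)`-smooth and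
ZOPPA (gradient descent on `F` with stepsize `λ`) satisfies
`F(x^k) - min F ≤ dist(x⁰, X⋆)²/(2λk)` for all `k ≥ 1`. -/
theorem zoppa_convex_rate {d : ℕ}
    (f : EuclideanSpace ℝ (Fin d) → ℝ) (hf : Continuous f)
    (hbdd : ∃ c : ℝ, ∀ x, c ≤ f x)
    (δ lam : ℝ) (hδ : 0 < δ) (hlam : 0 < lam)
    (hint : Integrable (fun y : EuclideanSpace ℝ (Fin d) => Real.exp (-f y / δ)))
    (F : EuclideanSpace ℝ (Fin d) → ℝ)
    (hF : ∀ x, F x = -δ * Real.log ((2 * Real.pi * lam * δ) ^ (-(d : ℝ) / 2) *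
          ∫ y : EuclideanSpace ℝ (Fin d),
            Real.exp (-(f y + ‖x - y‖ ^ 2 / (2 * lam)) / δ)))
    (hconv : ConvexOn ℝ Set.univ F)
    (Xstar : Set (EuclideanSpace ℝ (Fin d)))
    (hXstar : Xstar = {z | ∀ w, F z ≤ F w})
    (hne : Xstar.Nonempty)
    (x : ℕ → EuclideanSpace ℝ (Fin d))
    (hiter : ∀ k : ℕ, x (k + 1) = x k - lam • gradient F (x k)) :
    LipschitzWith (Real.toNNReal (1 / lam)) (gradient F) ∧
      ∀ xstar ∈ Xstar, ∀ k : ℕ, 1 ≤ k →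
        F (x k) - F xstar ≤ (Metric.infDist (x 0) Xstar) ^ 2 / (2 * lam * k) := by
  have hc : (0:ℝ) < (2 * Real.pi * lam * δ) ^ (-(d : ℝ) / 2) :=
    Real.rpow_pos_of_pos (mul_pos (mul_pos (mul_pos two_pos Real.pi_pos) hlam) hδ) _
  have hFu : ∀ z, F z = -δ * Real.log ((2 * Real.pi * lam * δ) ^ (-(d : ℝ) / 2) *
      zoppaU f δ lam z) := fun z => hF z
  have hupos : ∀ z, 0 < zoppaU f δ lam z := zoppaU_pos hf hint hδ hlam
  have hFd : ∀ z, DifferentiableAt ℝ F z := by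
    intro z
    have h1 : DifferentiableAt ℝ (fun w => -δ * Real.log
        ((2 * Real.pi * lam * δ) ^ (-(d : ℝ) / 2) * zoppaU f δ lam w)) z :=
      (((zoppaU_differentiable hf hint hδ hlam z).const_mul
        ((2 * Real.pi * lam * δ) ^ (-(d : ℝ) / 2))).log
        (mul_pos hc (hupos z)).ne').const_mul (-δ)
    exact h1.congr_of_eventuallyEq (Filter.Eventually.of_forall hFu)
  have hGconv : ConvexOn ℝ Set.univ (fun z => 1/(2*lam) * ‖z‖^2 - F z) := by
    have h0 := (zoppaU_logconv hf hint hδ hlam).add_const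
      (δ * Real.log ((2 * Real.pi * lam * δ) ^ (-(d : ℝ) / 2)))
    have heq : (fun z => 1/(2*lam) * ‖z‖^2 - F z)
        = fun z => (1/(2*lam) * ‖z‖^2 + δ * Real.log (zoppaU f δ lam z))
            + δ * Real.log ((2 * Real.pi * lam * δ) ^ (-(d : ℝ) / 2)) := by
      funext z
      rw [hFu z, Real.log_mul hc.ne' (hupos z).ne']
      ring
    rw [heq]
    exact h0
  have hdesc := zoppa_descent hlam hFd hGconv
  have hlow := zoppa_grad_ineq hconv (fun z => (hFd z).hasGradientAt)
  constructor
  · refine LipschitzWith.of_dist_le_mul fun a b => ?_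
    rw [dist_eq_norm, dist_eq_norm, Real.coe_toNNReal _ (one_div_pos.2 hlam).le]
    have h1 := zoppa_lip hlam hlow hdesc b a
    have h2 : ‖gradient F a - gradient F b‖ ≤ ‖a - b‖ / lam :=
      (le_div_iff₀ hlam).2 (by linarith)
    rw [one_div_mul_eq_div]
    exact h2
  · subst hXstar
    intro xstar hxs k hk
    have hxs' : ∀ w, F xstar ≤ F w := hxs
    have hstep : ∀ z, (∀ w, F z ≤ F w) → ∀ j : ℕ,
        2*lam*(F (x (j+1)) - F z) ≤ ‖x j - z‖^2 - ‖x (j+1) - z‖^2 ∧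
          F (x (j+1)) ≤ F (x j) := by
      intro z hz j
      have hx1 : x (j+1) - x j = -(lam • gradient F (x j)) := by rw [hiter j]; abel
      have hdj := hdesc (x j) (x (j+1))
      rw [hx1, inner_neg_right, real_inner_smul_right, real_inner_self_eq_norm_sq] at hdj
      have hn1 : ‖-(lam • gradient F (x j))‖^2 = lam^2*‖gradient F (x j)‖^2 := by
        rw [norm_neg, norm_smul]
        simp [abs_of_pos hlam]
        ring
      rw [hn1] at hdj
      have hc2 : 1/(2*lam)*(lam^2*‖gradient F (x j)‖^2) = lam/2*‖gradient F (x j)‖^2 := by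
        field_simp
      have hmono : F (x (j+1)) ≤ F (x j) := by
        have h5 : (0:ℝ) ≤ lam/2*‖gradient F (x j)‖^2 :=
          mul_nonneg (by linarith) (sq_nonneg _)
        linarith [hdj, hc2, h5]
      have hlz := hlow (x j) z
      have hzz : z - x j = -(x j - z) := by abel
      rw [hzz, inner_neg_right] at hlz
      have hns : ‖x (j+1) - z‖^2 = ‖x j - z‖^2
          - 2*(lam*⟪gradient F (x j), x j - z⟫) + lam^2*‖gradient F (x j)‖^2 := by
        have h4 : x (j+1) - z = (x j - z) - lam • gradient F (x j) := by rw [hiter j]; abel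
        rw [h4, norm_sub_sq_real, real_inner_smul_right, norm_smul, Real.norm_eq_abs,
          abs_of_pos hlam, mul_pow, real_inner_comm (x j - z) (gradient F (x j))]
      refine ⟨?_, hmono⟩
      have hlz2 := mul_le_mul_of_nonneg_left hlz (by linarith : (0:ℝ) ≤ 2*lam)
      have hdj2 := mul_le_mul_of_nonneg_left
        (show lam/2*‖gradient F (x j)‖^2 ≤ F (x j) - F (x (j+1)) by linarith [hdj, hc2])
        (by linarith : (0:ℝ) ≤ 2*lam)
      linarith [hlz2, hdj2, hns]
    have htel : ∀ z, (∀ w, F z ≤ F w) → ∀ j : ℕ,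
        2*lam*j*(F (x j) - F z) + ‖x j - z‖^2 ≤ ‖x 0 - z‖^2 := by
      intro z hz j
      induction j with
      | zero => simp
      | succ n ih =>
        have h1 := (hstep z hz n).1
        have h2 := (hstep z hz n).2
        have h3 : 2*lam*(n:ℝ)*(F (x (n+1)) - F z) ≤ 2*lam*(n:ℝ)*(F (x n) - F z) :=
          mul_le_mul_of_nonneg_left (by linarith) (by positivity)
        push_cast
        push_cast at ih
        linarith [h1, h3, ih]
    have hkpos : (0:ℝ) < (k:ℝ) := by
      have : (1:ℝ) ≤ (k:ℝ) := by exact_mod_cast hk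
      linarith
    have h2lk : (0:ℝ) < 2*lam*(k:ℝ) := by positivity
    rcases le_or_gt (F (x k) - F xstar) 0 with hng | hps
    · exact hng.trans (div_nonneg (sq_nonneg _) h2lk.le)
    · have hb : ∀ z ∈ {z | ∀ w, F z ≤ F w},
          Real.sqrt (2*lam*k*(F (x k) - F xstar)) ≤ dist (x 0) z := by
        intro z hz
        have hz' : ∀ w, F z ≤ F w := hz
        have hzz : F z = F xstar := le_antisymm (hz' xstar) (hxs' z)
        have h1 := htel z hz' k
        rw [dist_eq_norm]
        have h0 : 2*lam*k*(F (x k) - F xstar) ≤ ‖x 0 - z‖^2 := by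
          rw [← hzz]
          have := sq_nonneg ‖x k - z‖
          linarith
        calc Real.sqrt (2*lam*k*(F (x k) - F xstar)) ≤ Real.sqrt (‖x 0 - z‖^2) :=
              Real.sqrt_le_sqrt h0
        _ = ‖x 0 - z‖ := Real.sqrt_sq (norm_nonneg _)
      have hinf : Real.sqrt (2*lam*k*(F (x k) - F xstar))
          ≤ Metric.infDist (x 0) {z | ∀ w, F z ≤ F w} := by
        by_contra hcon
        push_neg at hcon
        obtain ⟨z, hz, hdz⟩ := (Metric.infDist_lt_iff hne).1 hcon
        linarith [hb z hz]
      have hsq := mul_self_le_mul_self (Real.sqrt_nonneg _) hinf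
      rw [Real.mul_self_sqrt (mul_pos h2lk hps).le] at hsq
      rw [le_div_iff₀ h2lk]
      calc (F (x k) - F xstar) * (2*lam*(k:ℝ)) = 2*lam*(k:ℝ)*(F (x k) - F xstar) := by ring
      _ ≤ Metric.infDist (x 0) {z | ∀ w, F z ≤ F w}
            * Metric.infDist (x 0) {z | ∀ w, F z ≤ F w} := hsq
      _ = (Metric.infDist (x 0) {z | ∀ w, F z ≤ F w})^2 := by rw [pow_two]
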